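/- Let u be a non-trivial plane wave solution on Minkowski space of the polarized Maxwell equation *du = αi·du (α = ±1), and define R_{κλμν}(x) := Re((du)_{κλ}(x)(du)_{μν}(x)). Then at every point R is anti-self-dual under double duality: *R* = −R, where (*R*)_{κλμν} := (1/4) ε^{κ′λ′}_{κλ} ε^{μ′ν′}_{μν} R_{κ′λ′μ′ν′}; that is, R lies in the invariant subspace 𝓡_{+−} (R^T = R and *R* = −R) singled out by Einstein's double duality analysis. -/
import Mathlib


noncomputable section
open Complex Finset

/-- The Minkowski metric `diag(+1,-1,-1,-1)` on `ℝ⁴`. -/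
def gR (μ ν : Fin 4) : ℝ := if μ = ν then (if μ = (0 : Fin 4) then 1 else -1) else 0

/-- The value of an index as a real number. -/
def fv (a : Fin 4) : ℝ := (a : ℕ)

/-- The totally antisymmetric symbol `ε` with `ε₀₁₂₃ = +1`. -/
def eps (a b c d : Fin 4) : ℝ :=
  ((fv b - fv a) * (fv c - fv a) * (fv d - fv a) *
    (fv c - fv b) * (fv d - fv b) * (fv d - fv c)) / 12

/-- The Hodge star of an antisymmetric rank-2 (lower-index) tensor:
`(*L)_{μν} = (1/2) L^{κλ} ε_{κλμν}`, indices raised with the Minkowski metric. -/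
def hodge (L : Fin 4 → Fin 4 → ℂ) (μ ν : Fin 4) : ℂ :=
  (1/2) * ∑ κ : Fin 4, ∑ l : Fin 4, ((gR κ κ * gR l l * eps κ l μ ν : ℝ) : ℂ) * L κ l

/-- The partial derivative `∂_μ` of a function on Minkowski space `ℝ⁴`. -/
def pd {E : Type*} [NormedAddCommGroup E] [NormedSpace ℝ E]
    (μ : Fin 4) (f : (Fin 4 → ℝ) → E) (x : Fin 4 → ℝ) : E :=
  fderiv ℝ f x (Pi.single μ 1)

/-- The exterior derivative of a complex vector field: `(du)_{μν} = ∂_μ u_ν − ∂_ν u_μ`. -/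
def dEx (u : (Fin 4 → ℝ) → Fin 4 → ℂ) (x : Fin 4 → ℝ) (μ ν : Fin 4) : ℂ :=
  pd μ (fun y => u y ν) x - pd ν (fun y => u y μ) x

/-- `u` is a plane wave: `u(x) = w e^{−i k·x}` with constant `w` and constant real `k ≠ 0`. -/
def IsPlaneWave (u : (Fin 4 → ℝ) → Fin 4 → ℂ) : Prop :=
  ∃ (w : Fin 4 → ℂ) (k : Fin 4 → ℝ), k ≠ 0 ∧
    ∀ x μ, u x μ = w μ * Complex.exp (-Complex.I * ∑ ρ : Fin 4, ((k ρ : ℂ) * (x ρ : ℂ)))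


/-- The Riemann curvature of the spacetimes of Theorem 2:
`R_{κλμν}(x) = Re((du)_{κλ}(x) (du)_{μν}(x))`. -/
def Rwave (u : (Fin 4 → ℝ) → Fin 4 → ℂ) (x : Fin 4 → ℝ) (κ lam μ ν : Fin 4) : ℝ :=
  (dEx u x κ lam * dEx u x μ ν).re

/-- The double dual `(*R*)_{κλμν} := (1/4) ε^{κ'λ'}_{κλ} ε^{μ'ν'}_{μν} R_{κ'λ'μ'ν'}`,
primed indices raised with the Minkowski metric. -/
def dd (R : Fin 4 → Fin 4 → Fin 4 → Fin 4 → ℝ) (κ lam μ ν : Fin 4) : ℝ :=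
  (1/4) * ∑ κ' : Fin 4, ∑ l' : Fin 4, ∑ μ' : Fin 4, ∑ ν' : Fin 4,
    gR κ' κ' * gR l' l' * gR μ' μ' * gR ν' ν' * eps κ' l' κ lam * eps μ' ν' μ ν * R κ' l' μ' ν'

/-- for a non-trivial plane wave solution `u` of `*du = α i du`, the curvature
`R_{κλμν} = Re((du)_{κλ}(du)_{μν})` is, at every point, anti-self-dual under double duality,
`*R* = −R`, and symmetric under exchange of index pairs, `R^T = R`; i.e. it lies in Einstein's
invariant subspace `𝓡₊₋`. -/

lemma sum4_mul (S T : Fin 4 → Fin 4 → ℂ) :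
    (∑ a : Fin 4, ∑ b : Fin 4, S a b) * (∑ c : Fin 4, ∑ d : Fin 4, T c d) =
      ∑ a : Fin 4, ∑ b : Fin 4, ∑ c : Fin 4, ∑ d : Fin 4, S a b * T c d := by
  rw [Finset.sum_mul]
  refine Finset.sum_congr rfl fun a _ => ?_
  rw [Finset.sum_mul]
  refine Finset.sum_congr rfl fun b _ => ?_
  rw [Finset.mul_sum]
  refine Finset.sum_congr rfl fun c _ => ?_
  rw [Finset.mul_sum]

lemma key_dd (F : Fin 4 → Fin 4 → ℂ) (κ l μ ν : Fin 4) :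
    dd (fun a b c d => (F a b * F c d).re) κ l μ ν =
      (hodge F κ l * hodge F μ ν).re := by
  have expand : hodge F κ l * hodge F μ ν =
      ∑ a : Fin 4, ∑ b : Fin 4, ∑ c : Fin 4, ∑ d : Fin 4,
        (((1/4) * (gR a a * gR b b * gR c c * gR d d * eps a b κ l * eps c d μ ν) : ℝ) : ℂ)
          * (F a b * F c d) := by
    calc hodge F κ l * hodge F μ ν
        = (1/4 : ℂ) * ((∑ a : Fin 4, ∑ b : Fin 4,
              ((gR a a * gR b b * eps a b κ l : ℝ) : ℂ) * F a b) *
            (∑ c : Fin 4, ∑ d : Fin 4,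
              ((gR c c * gR d d * eps c d μ ν : ℝ) : ℂ) * F c d)) := by
          rw [hodge, hodge]; ring
      _ = (1/4 : ℂ) * ∑ a : Fin 4, ∑ b : Fin 4, ∑ c : Fin 4, ∑ d : Fin 4,
            (((gR a a * gR b b * eps a b κ l : ℝ) : ℂ) * F a b) *
            (((gR c c * gR d d * eps c d μ ν : ℝ) : ℂ) * F c d) := by
          rw [sum4_mul]
      _ = _ := by
          simp only [Finset.mul_sum]
          refine Finset.sum_congr rfl fun a _ => ?_
          refine Finset.sum_congr rfl fun b _ => ?_
          refine Finset.sum_congr rfl fun c _ => ?_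
          refine Finset.sum_congr rfl fun d _ => ?_
          push_cast
          ring
  rw [expand]
  simp only [Complex.re_sum, Complex.re_ofReal_mul, dd, Finset.mul_sum]
  refine Finset.sum_congr rfl fun a _ => ?_
  refine Finset.sum_congr rfl fun b _ => ?_
  refine Finset.sum_congr rfl fun c _ => ?_
  refine Finset.sum_congr rfl fun d _ => ?_
  ring

theorem curvature_in_R_plus_minus (u : (Fin 4 → ℝ) → Fin 4 → ℂ)
    (hpw : IsPlaneWave u)
    (hnt : ¬ (∀ x μ ν, dEx u x μ ν = 0))
    (α : ℝ) (hα : α = 1 ∨ α = -1)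
    (hpol : ∀ x μ ν, hodge (dEx u x) μ ν = (α : ℂ) * Complex.I * dEx u x μ ν) :
    (∀ x κ lam μ ν, dd (Rwave u x) κ lam μ ν = - Rwave u x κ lam μ ν) ∧
    (∀ x κ lam μ ν, Rwave u x μ ν κ lam = Rwave u x κ lam μ ν) := by
  constructor
  · intro x κ lam μ ν
    have h := key_dd (dEx u x) κ lam μ ν
    rw [hpol, hpol] at h
    have hα2 : α ^ 2 = 1 := by rcases hα with h1 | h1 <;> rw [h1] <;> norm_num
    have hmul : ((α : ℂ) * Complex.I * dEx u x κ lam) *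
        ((α : ℂ) * Complex.I * dEx u x μ ν) =
        -(((α ^ 2 : ℝ) : ℂ)) * (dEx u x κ lam * dEx u x μ ν) := by
      have : Complex.I ^ 2 = -1 := Complex.I_sq
      push_cast
      ring_nf
      rw [Complex.I_sq]
      ring
    rw [hmul, hα2] at h
    have : dd (Rwave u x) κ lam μ ν =
        (-(((1 : ℝ) : ℂ)) * (dEx u x κ lam * dEx u x μ ν)).re := h
    rw [this]
    simp [Rwave]
  · intro x κ lam μ ν
    exact congrArg Complex.re (mul_comm _ _)
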